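/- Let κ > 0, γ > 0 and δ ∈ ℝ with δ > −κ/γ and δ ≠ 0, and set δ₀ := δ if δ > 0 and δ₀ := κ/γ if −κ/γ < δ < 0. Then there exists ε₁ > 0 such that for every real g with 0 < g ≤ γ, every dimension d ≥ 1 and all vectors p, q ∈ ℝᵈ one has ‖p‖²/g + (δ/δ₀ − 1)·⟨p, q⟩ + (κ/δ₀)·‖q‖² ≥ ε₁·(‖p‖²/g + ‖q‖²/δ₀²), where ⟨·,·⟩ is the Euclidean inner product. -/

import Mathlib

set_option maxHeartbeats 1000000


/-- The gradient-form consequence (ex.wBw)/(1.eps1) of Lemma 3.1. -/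
theorem stmt_3 (κ γ δ δ₀ : ℝ) (hκ : 0 < κ) (hγ : 0 < γ)
    (hδ : -κ / γ < δ) (hδne : δ ≠ 0)
    (hδ₀ : δ₀ = if 0 < δ then δ else κ / γ) :
    ∃ ε₁ > 0, ∀ g : ℝ, 0 < g → g ≤ γ → ∀ d : ℕ, 1 ≤ d →
      ∀ p q : EuclideanSpace ℝ (Fin d),
        ‖p‖ ^ 2 / g + (δ / δ₀ - 1) * (inner ℝ p q : ℝ) + (κ / δ₀) * ‖q‖ ^ 2 ≥
          ε₁ * (‖p‖ ^ 2 / g + ‖q‖ ^ 2 / δ₀ ^ 2) := by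
  subst hδ₀
  have hκγ : -κ < δ * γ := by
    have := (div_lt_iff₀ hγ).mp hδ
    linarith [this]
  rcases lt_or_ge 0 δ with hpos | hneg
  · -- case δ > 0
    rw [if_pos hpos]
    refine ⟨min 1 (κ * δ), lt_min one_pos (mul_pos hκ hpos), ?_⟩
    intro g hg hgγ d hd p q
    have hA : (0:ℝ) ≤ ‖p‖ ^ 2 / g := by positivity
    have hB : (0:ℝ) ≤ ‖q‖ ^ 2 := by positivity
    have h1 : min 1 (κ * δ) ≤ 1 := min_le_left _ _
    have h2 : min 1 (κ * δ) ≤ κ * δ := min_le_right _ _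
    have hdd : δ / δ - 1 = 0 := by rw [div_self hδne, sub_self]
    rw [hdd, zero_mul]
    have hq : min 1 (κ * δ) * (‖q‖ ^ 2 / δ ^ 2) ≤ κ / δ * ‖q‖ ^ 2 := by
      have hc : min 1 (κ * δ) / δ ^ 2 ≤ κ / δ := by
        rw [div_le_div_iff₀ (by positivity) hpos]
        nlinarith
      calc min 1 (κ * δ) * (‖q‖ ^ 2 / δ ^ 2) = min 1 (κ * δ) / δ ^ 2 * ‖q‖ ^ 2 := by ring
        _ ≤ κ / δ * ‖q‖ ^ 2 := mul_le_mul_of_nonneg_right hc hB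
    nlinarith
  · -- case δ < 0
    have hneg' : δ < 0 := lt_of_le_of_ne hneg hδne
    rw [if_neg (not_lt.mpr hneg)]
    set s : ℝ := δ * γ / κ with hs
    have hs0 : -1 < s := by
      rw [hs, lt_div_iff₀ hκ]
      linarith
    have hs1 : s < 0 := by
      rw [hs]
      exact div_neg_of_neg_of_pos (mul_neg_of_neg_of_pos hneg' hγ) hκ
    refine ⟨(1 + s) / 2 * (κ ^ 2 / (κ ^ 2 + γ)), by
      have h1s : (0:ℝ) < 1 + s := by linarith
      positivity, ?_⟩
    intro g hg hgγ d hd p q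
    set a := ‖p‖ with ha
    set b := ‖q‖ with hb
    have hA0 : (0:ℝ) ≤ a ^ 2 / g := by positivity
    have hAγ : a ^ 2 ≤ (a ^ 2 / g) * γ := by
      rw [div_mul_eq_mul_div, le_div_iff₀ hg]
      nlinarith [sq_nonneg a]
    have hip : (inner ℝ p q : ℝ) ≤ a * b := real_inner_le_norm p q
    have hb0 : (0:ℝ) ≤ b := norm_nonneg q
    have ha0 : (0:ℝ) ≤ a := norm_nonneg p
    -- simplify δ / (κ/γ) = s and κ / (κ/γ) = γ
    have hkγ : κ / γ ≠ 0 := by positivity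
    have e1 : δ / (κ / γ) = s := by rw [hs]; field_simp
    have e2 : κ / (κ / γ) = γ := by field_simp
    have e3 : (κ / γ) ^ 2 = κ ^ 2 / γ ^ 2 := by rw [div_pow]
    rw [e1, e2, e3]
    -- cross term bound
    have hcross : (s - 1) * (inner ℝ p q : ℝ) ≥ (s - 1) * (a * b) := by
      apply mul_le_mul_of_nonpos_left hip (by linarith)
    have hamgm : a * b ≤ ((a ^ 2 / g) + γ * b ^ 2) / 2 := by
      have h2γ : 2 * γ * (a * b) ≤ a ^ 2 + γ ^ 2 * b ^ 2 := by
        nlinarith [sq_nonneg (a - γ * b)]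
      rw [le_div_iff₀ (by norm_num : (0:ℝ) < 2)]
      nlinarith
    have hcross2 : (s - 1) * (inner ℝ p q : ℝ) ≥ (s - 1) * (((a ^ 2 / g) + γ * b ^ 2) / 2) := by
      have := mul_le_mul_of_nonpos_left hamgm (show s - 1 ≤ 0 by linarith)
      linarith [hcross]
    have hdiv : b ^ 2 / (κ ^ 2 / γ ^ 2) = b ^ 2 * γ ^ 2 / κ ^ 2 := by
      field_simp
    rw [hdiv]
    set A := a ^ 2 / g with hAdef
    clear_value A a b
    have key : (1 + s) / 2 * (A + γ * b ^ 2) ≥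
        (1 + s) / 2 * (κ ^ 2 / (κ ^ 2 + γ)) * (A + b ^ 2 * γ ^ 2 / κ ^ 2) := by
      have h1 : (0:ℝ) < κ ^ 2 + γ := by positivity
      have hc : κ ^ 2 / (κ ^ 2 + γ) * (A + b ^ 2 * γ ^ 2 / κ ^ 2) ≤ A + γ * b ^ 2 := by
        rw [div_mul_eq_mul_div, div_le_iff₀ h1]
        have hκ2 : κ ^ 2 ≠ 0 := by positivity
        field_simp
        clear hip hcross hcross2 hamgm e1 e2 e3 hdiv ha hb p q hd
        nlinarith [mul_nonneg hA0 hγ.le, mul_nonneg (mul_nonneg hγ.le (sq_nonneg b)) (sq_nonneg κ)]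
      have h1s : (0:ℝ) ≤ (1 + s) / 2 := by linarith
      calc (1 + s) / 2 * (κ ^ 2 / (κ ^ 2 + γ)) * (A + b ^ 2 * γ ^ 2 / κ ^ 2)
          = (1 + s) / 2 * (κ ^ 2 / (κ ^ 2 + γ) * (A + b ^ 2 * γ ^ 2 / κ ^ 2)) := by ring
        _ ≤ (1 + s) / 2 * (A + γ * b ^ 2) := by
            exact mul_le_mul_of_nonneg_left hc h1s
    linarith [hcross2, key]
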